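/- Let R := o_L/π_L^n o_L. The map from R((Z)) to the R-module of continuous R-linear maps Hom_R^c(R((Z)), R) (compact-open topology, R discrete) sending g to ℓ_g(f) := Res(f·g) is an isomorphism of topological R-modules, i.e. it is bijective, continuous, and open. -/

import Mathlib

set_option linter.unusedSectionVars false

open HahnSeries Set Filter

namespace S7

variable {R : Type*} [CommRing R]

/-- The basic subgroups `Z^m R[[Z]]` of the Laurent series ring. -/
def V (R : Type*) [CommRing R] (m : ℤ) : Set (LaurentSeries R) :=
  {f | ∀ i : ℤ, i < m → f.coeff i = 0}

lemma V_antitone {m m' : ℤ} (h : m ≤ m') : V R m' ⊆ V R m :=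
  fun _ hf i hi => hf i (lt_of_lt_of_le hi h)

lemma mul_coeff_eq_zero {f g : LaurentSeries R} {a b c : ℤ}
    (hf : ∀ i < a, f.coeff i = 0) (hg : ∀ j < b, g.coeff j = 0) (hc : c < a + b) :
    (f * g).coeff c = 0 := by
  rw [HahnSeries.coeff_mul]
  refine Finset.sum_eq_zero fun ij hij => ?_
  rcases Finset.mem_addAntidiagonal.mp hij with ⟨h1, h2, h3⟩
  by_contra hne
  have hfa : a ≤ ij.1 := by
    by_contra hlt
    exact hne (by rw [hf ij.1 (lt_of_not_ge hlt), zero_mul])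
  have hgb : b ≤ ij.2 := by
    by_contra hlt
    exact hne (by rw [hg ij.2 (lt_of_not_ge hlt), mul_zero])
  omega

lemma res_single_mul (m : ℤ) (r : R) (g : LaurentSeries R) :
    ((HahnSeries.single m r : LaurentSeries R) * g).coeff (-1) = r * g.coeff (-1 - m) := by
  have := HahnSeries.coeff_single_mul_add (r := r) (x := g) (a := -1 - m) (b := m)
  rwa [sub_add_cancel] at this

lemma exists_bound (f : LaurentSeries R) : ∃ N : ℕ, ∀ i : ℤ, i < -(N : ℤ) → f.coeff i = 0 := by
  by_cases h : f.support.Nonempty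
  · have hwf : f.support.IsWF := f.isPWO_support.isWF
    set m := hwf.min h with hm
    refine ⟨(-m).toNat, fun i hi => ?_⟩
    by_contra hne
    have : m ≤ i := hwf.min_le h hne
    have : -((-m).toNat : ℤ) ≤ m := by
      have := Int.self_le_toNat (-m)
      omega
    omega
  · exact ⟨0, fun i _ => not_not.mp fun hne => h ⟨i, hne⟩⟩


def Vgrp (R : Type*) [CommRing R] (m : ℤ) : AddSubgroup (LaurentSeries R) where
  carrier := V R m
  zero_mem' := fun i _ => HahnSeries.coeff_zero
  add_mem' := by
    intro a b ha hb i hi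
    rw [HahnSeries.coeff_add, ha i hi, hb i hi, add_zero]
  neg_mem' := by
    intro a ha i hi
    rw [HahnSeries.coeff_neg, ha i hi, neg_zero]

section Top

variable [TopologicalSpace R] [DiscreteTopology R]
  [TopologicalSpace (LaurentSeries R)] [IsTopologicalRing (LaurentSeries R)]

lemma V_mem_nhds
    (hbasis : (nhds (0 : LaurentSeries R)).HasBasis (fun _ : ℕ => True)
      (fun k => {f : LaurentSeries R | ∀ i : ℤ, i < (k : ℤ) → f.coeff i = 0}))
    (m : ℤ) : V R m ∈ nhds (0 : LaurentSeries R) := by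
  refine Filter.mem_of_superset (hbasis.mem_of_mem (i := m.toNat) trivial)
    (V_antitone ?_)
  exact Int.self_le_toNat m

lemma V_isOpen
    (hbasis : (nhds (0 : LaurentSeries R)).HasBasis (fun _ : ℕ => True)
      (fun k => {f : LaurentSeries R | ∀ i : ℤ, i < (k : ℤ) → f.coeff i = 0}))
    (m : ℤ) : IsOpen (V R m) :=
  AddSubgroup.isOpen_of_mem_nhds (Vgrp R m) (V_mem_nhds hbasis m)

lemma ell_continuous
    (hbasis : (nhds (0 : LaurentSeries R)).HasBasis (fun _ : ℕ => True)
      (fun k => {f : LaurentSeries R | ∀ i : ℤ, i < (k : ℤ) → f.coeff i = 0}))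
    (g : LaurentSeries R) :
    Continuous fun f : LaurentSeries R => (f * g).coeff (-1) := by
  obtain ⟨N, hN⟩ := exists_bound g
  refine IsLocallyConstant.continuous ((IsLocallyConstant.iff_exists_open _).2 fun x => ?_)
  refine ⟨(· - x) ⁻¹' V R N, (V_isOpen hbasis N).preimage (continuous_sub_right x), ?_, ?_⟩
  · simp only [Set.mem_preimage, sub_self]
    exact fun i _ => HahnSeries.coeff_zero
  · intro y hy
    have : y * g = (y - x) * g + x * g := by rw [← add_mul, sub_add_cancel]
    rw [this, HahnSeries.coeff_add, mul_coeff_eq_zero hy hN (by omega), zero_add]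

end Top

lemma ell_linear (g : LaurentSeries R) :
    IsLinearMap R fun f : LaurentSeries R => (f * g).coeff (-1) := by
  constructor
  · intro a b; rw [add_mul, HahnSeries.coeff_add]
  · intro c a
    rw [← HahnSeries.single_zero_mul_eq_smul, mul_assoc, HahnSeries.single_zero_mul_eq_smul,
      HahnSeries.coeff_smul, smul_eq_mul]

lemma single_eq_smul (i : ℤ) (c : R) :
    (HahnSeries.single i c : LaurentSeries R) = c • HahnSeries.single i (1 : R) := by
  ext j
  rw [HahnSeries.coeff_smul, HahnSeries.coeff_single, HahnSeries.coeff_single]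
  split <;> simp

lemma exists_trunc (f : LaurentSeries R) (k : ℤ) :
    ∃ (s : Finset ℤ) (r : LaurentSeries R),
      f = (∑ i ∈ s, HahnSeries.single i (f.coeff i)) + r ∧ r ∈ V R k := by
  obtain ⟨N, hN⟩ := exists_bound f
  have hfin : (f.support ∩ Set.Iio k).Finite := by
    refine (Set.finite_Icc (-(N : ℤ)) k).subset fun i hi => ?_
    rcases hi with ⟨hi1, hi2⟩
    refine ⟨?_, le_of_lt hi2⟩
    by_contra h
    exact hi1 (hN i (by omega))
  refine ⟨hfin.toFinset, f - ∑ i ∈ hfin.toFinset, HahnSeries.single i (f.coeff i),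
    by ring, fun i hi => ?_⟩
  have hP : (∑ j ∈ hfin.toFinset, (HahnSeries.single j (f.coeff j) : LaurentSeries R)).coeff i
      = if i ∈ hfin.toFinset then f.coeff i else 0 := by
    rw [← HahnSeries.coeff.addMonoidHom_apply, map_sum]
    simp only [HahnSeries.coeff.addMonoidHom_apply, HahnSeries.coeff_single]
    rw [show (fun x => @ite R (i = x) (Classical.propDecidable (i = x)) (f.coeff x) 0)
        = (fun x => if i = x then f.coeff x else 0) from funext fun x => by congr 1]
    exact Finset.sum_ite_eq hfin.toFinset i (fun j => f.coeff j)
  rw [HahnSeries.coeff_sub, hP]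
  by_cases h : i ∈ hfin.toFinset
  · simp [h]
  · have : f.coeff i = 0 := by
      by_contra hne
      exact h (hfin.mem_toFinset.mpr ⟨hne, hi⟩)
    simp [h, this]


lemma res_trunc (g : LaurentSeries R) (k : ℤ) (hg : ∀ j : ℤ, j < -k → g.coeff j = 0)
    (f : LaurentSeries R) (s : Finset ℤ) (r : LaurentSeries R)
    (hf : f = (∑ i ∈ s, HahnSeries.single i (f.coeff i)) + r) (hr : r ∈ V R k) :
    (f * g).coeff (-1) = ∑ i ∈ s, f.coeff i * g.coeff (-1 - i) := by
  conv_lhs => rw [hf]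
  rw [add_mul, HahnSeries.coeff_add, mul_coeff_eq_zero hr hg (by omega), add_zero,
    Finset.sum_mul, ← HahnSeries.coeff.addMonoidHom_apply, map_sum]
  simp only [HahnSeries.coeff.addMonoidHom_apply]
  exact Finset.sum_congr rfl fun i _ => res_single_mul i (f.coeff i) g

lemma rep_injective {g g' : LaurentSeries R}
    (h : ∀ f : LaurentSeries R, (f * g).coeff (-1) = (f * g').coeff (-1)) : g = g' := by
  ext j
  have := h (HahnSeries.single (-1 - j) 1)
  rwa [res_single_mul, res_single_mul, one_mul, one_mul,
    show (-1 : ℤ) - (-1 - j) = j by ring] at this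

section Top2

variable [TopologicalSpace R] [DiscreteTopology R]
  [TopologicalSpace (LaurentSeries R)] [IsTopologicalRing (LaurentSeries R)]

lemma exists_rep
    (hbasis : (nhds (0 : LaurentSeries R)).HasBasis (fun _ : ℕ => True)
      (fun k => {f : LaurentSeries R | ∀ i : ℤ, i < (k : ℤ) → f.coeff i = 0}))
    (l : C(LaurentSeries R, R)) (hl : IsLinearMap R ⇑l) :
    ∃ g : LaurentSeries R, ∀ f, l f = (f * g).coeff (-1) := by
  have hl0 : l 0 = 0 := (IsLinearMap.mk' ⇑l hl).map_zero
  have hker : ⇑l ⁻¹' {0} ∈ nhds (0 : LaurentSeries R) :=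
    (l.continuous.isOpen_preimage _ (isOpen_discrete _)).mem_nhds (by simp [hl0])
  obtain ⟨k, -, hk⟩ := hbasis.mem_iff.mp hker
  have hkV : V R (k : ℤ) ⊆ ⇑l ⁻¹' {0} := hk
  set c : ℤ → R := fun j => l (HahnSeries.single (-1 - j) 1) with hc
  have hc0 : ∀ j : ℤ, j < -(k : ℤ) → c j = 0 := by
    intro j hj
    refine hkV fun i hi => ?_
    rw [HahnSeries.coeff_single_of_ne]
    omega
  have hsupp : (Function.support c).IsPWO := by
    have hbdd : BddBelow (Function.support c) :=
      ⟨-(k : ℤ), fun j hj => by by_contra h; exact hj (hc0 j (lt_of_not_ge h))⟩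
    exact Set.IsWF.isPWO hbdd.wellFoundedOn_lt
  set g : LaurentSeries R := ⟨c, hsupp⟩ with hgdef
  have hgV : ∀ j : ℤ, j < -(k : ℤ) → g.coeff j = 0 := hc0
  refine ⟨g, fun f => ?_⟩
  obtain ⟨s, r, hf, hr⟩ := exists_trunc f (k : ℤ)
  rw [res_trunc g (k : ℤ) hgV f s r hf hr]
  have hr0 : l r = 0 := hkV hr
  have hterm : ∀ i : ℤ, l (HahnSeries.single i (f.coeff i)) = f.coeff i * g.coeff (-1 - i) := by
    intro i
    have harg : (-1 : ℤ) - (-1 - i) = i := by ring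
    rw [single_eq_smul, hl.map_smul, smul_eq_mul]
    show f.coeff i * l (HahnSeries.single i 1) = f.coeff i * c (-1 - i)
    simp only [hc]
    rw [harg]
  calc l f = l ((∑ i ∈ s, HahnSeries.single i (f.coeff i)) + r) := by rw [← hf]
    _ = l (∑ i ∈ s, HahnSeries.single i (f.coeff i)) + l r := hl.map_add _ _
    _ = l (∑ i ∈ s, HahnSeries.single i (f.coeff i)) := by rw [hr0, add_zero]
    _ = ∑ i ∈ s, l (HahnSeries.single i (f.coeff i)) :=
        map_sum (IsLinearMap.mk' ⇑l hl) _ s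
    _ = ∑ i ∈ s, f.coeff i * g.coeff (-1 - i) := Finset.sum_congr rfl fun i _ => hterm i

lemma compact_bound
    (hbasis : (nhds (0 : LaurentSeries R)).HasBasis (fun _ : ℕ => True)
      (fun k => {f : LaurentSeries R | ∀ i : ℤ, i < (k : ℤ) → f.coeff i = 0}))
    {K : Set (LaurentSeries R)} (hK : IsCompact K) :
    ∃ N : ℕ, ∀ f ∈ K, ∀ i : ℤ, i < -(N : ℤ) → f.coeff i = 0 := by
  have hdir : Directed (· ⊆ ·) (fun N : ℕ => V R (-(N : ℤ))) := fun a b =>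
    ⟨max a b, V_antitone (by simp), V_antitone (by simp)⟩
  have hcover : K ⊆ ⋃ N : ℕ, V R (-(N : ℤ)) := fun f _ => by
    obtain ⟨N, hN⟩ := exists_bound f
    exact Set.mem_iUnion.mpr ⟨N, hN⟩
  obtain ⟨N, hN⟩ := hK.elim_directed_cover _ (fun N => V_isOpen hbasis _) hcover hdir
  exact ⟨N, fun f hf => hN hf⟩

lemma compact_singles
    (hbasis : (nhds (0 : LaurentSeries R)).HasBasis (fun _ : ℕ => True)
      (fun k => {f : LaurentSeries R | ∀ i : ℤ, i < (k : ℤ) → f.coeff i = 0}))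
    (k : ℤ) :
    IsCompact (insert (0 : LaurentSeries R)
      (Set.range fun m : ℕ => (HahnSeries.single (-k + m) (1 : R) : LaurentSeries R))) := by
  apply Filter.Tendsto.isCompact_insert_range
  rw [hbasis.tendsto_right_iff]
  intro j _
  filter_upwards [Filter.eventually_ge_atTop (k + j).toNat] with m hm
  intro i hi
  apply HahnSeries.coeff_single_of_ne
  have hm' : ((k + j).toNat : ℤ) ≤ (m : ℤ) := Int.ofNat_le.mpr hm
  omega

end Top2

lemma open_agree {X : Type*} [TopologicalSpace X] {S : Type*} [TopologicalSpace S]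
    [DiscreteTopology S] {K : Set X} (hK : IsCompact K) (l₀ : C(X, S)) :
    IsOpen {l' : C(X, S) | ∀ f ∈ K, l' f = l₀ f} := by
  have himfin : (⇑l₀ '' K).Finite := (hK.image l₀.continuous).finite_of_discrete
  have heq : {l' : C(X, S) | ∀ f ∈ K, l' f = l₀ f}
      = ⋂ r ∈ (⇑l₀ '' K), {l' : C(X, S) | Set.MapsTo ⇑l' (K ∩ ⇑l₀ ⁻¹' {r}) {r}} := by
    ext l'
    simp only [Set.mem_setOf_eq, Set.mem_iInter]
    constructor
    · rintro h r ⟨f₀, hf₀, rfl⟩ f ⟨hfK, hfr⟩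
      exact hfr ▸ h f hfK
    · intro h f hf
      exact h (l₀ f) ⟨f, hf, rfl⟩ ⟨hf, rfl⟩
  rw [heq]
  exact himfin.isOpen_biInter fun r _ =>
    ContinuousMap.isOpen_setOf_mapsTo (hK.inter_right ((isClosed_discrete _).preimage l₀.continuous)) (isOpen_discrete _)

end S7


/-- `O = o_L` is the ring of integers of a finite extension `L` of `ℚ_p` with prime element `π`,
`n ≥ 1`, and `R := o_L/π^n o_L` (modelled as a discrete commutative ring `R` with a surjection
`o_L → R` of kernel `(π^n)`).  The Laurent series ring `R((Z))` carries the topology in which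
`R` is discrete and the subgroups `Z^k R[[Z]]` (`k ≥ 0`) form a fundamental system of open
neighbourhoods of `0` (hypotheses `[TopologicalRing]` and `hbasis`); with this topology it is
a complete Hausdorff topological ring.  `Res : R((Z)) → R` is the residue map
`Σ aᵢ Zⁱ ↦ a_{-1}`, formalised as `·.coeff (-1)`.

Conclusion: the map sending `g ∈ R((Z))` to the functional `ℓ_g : f ↦ Res(f·g)` is an
isomorphism of topological `R`-modules from `R((Z))` onto the module `Hom_R^c(R((Z)), R)` of
continuous `R`-linear maps with the compact-open topology: it is bijective (the equivalence
`Φ`), given by the residue pairing, continuous, and open. -/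
theorem statement7_residue_duality
    (O : Type*) [CommRing O] [IsDomain O] [IsDiscreteValuationRing O]
    (π : O) (hπ : Irreducible π) [IsAdicComplete (Ideal.span {π}) O]
    (n : ℕ) (hn : 1 ≤ n)
    (R : Type*) [CommRing R] [Algebra O R]
    (hRsurj : Function.Surjective (algebraMap O R))
    (hRker : RingHom.ker (algebraMap O R) = Ideal.span {π ^ n})
    [TopologicalSpace R] [DiscreteTopology R]
    [TopologicalSpace (LaurentSeries R)] [IsTopologicalRing (LaurentSeries R)]
    (hbasis : (nhds (0 : LaurentSeries R)).HasBasis (fun _ : ℕ => True)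
      (fun k => {f : LaurentSeries R | ∀ i : ℤ, i < (k : ℤ) → f.coeff i = 0})) :
    ∃ Φ : LaurentSeries R ≃ {l : C(LaurentSeries R, R) // IsLinearMap R ⇑l},
      (∀ g f : LaurentSeries R, ((Φ g : C(LaurentSeries R, R)) f) = (f * g).coeff (-1))
        ∧ Continuous (fun g => Φ g)
        ∧ IsOpenMap (fun g => Φ g) := by
  classical
  let L : LaurentSeries R → {l : C(LaurentSeries R, R) // IsLinearMap R ⇑l} := fun g =>
    ⟨⟨fun f => (f * g).coeff (-1), S7.ell_continuous hbasis g⟩, S7.ell_linear g⟩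
  have hinj : Function.Injective L := by
    intro g g' h
    exact S7.rep_injective fun f =>
      congrArg (fun l : {l : C(LaurentSeries R, R) // IsLinearMap R ⇑l} =>
        (l.1 : C(LaurentSeries R, R)) f) h
  have hsurj : Function.Surjective L := by
    rintro ⟨l, hl⟩
    obtain ⟨g, hg⟩ := S7.exists_rep hbasis l hl
    exact ⟨g, Subtype.ext (ContinuousMap.ext fun f => (hg f).symm)⟩
  refine ⟨Equiv.ofBijective L ⟨hinj, hsurj⟩, fun g f => rfl, ?_, ?_⟩
  · -- continuity
    have hcont : Continuous fun g : LaurentSeries R =>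
        (⟨fun f => (f * g).coeff (-1), S7.ell_continuous hbasis g⟩
          : C(LaurentSeries R, R)) := by
      rw [ContinuousMap.continuous_compactOpen]
      intro K hK U hU
      obtain ⟨N, hN⟩ := S7.compact_bound hbasis hK
      rw [isOpen_iff_mem_nhds]
      intro g₀ hg₀
      have hopen : IsOpen ((fun g : LaurentSeries R => g - g₀) ⁻¹' S7.V R (N : ℤ)) :=
        (S7.V_isOpen hbasis _).preimage (continuous_id.sub continuous_const)
      refine Filter.mem_of_superset (hopen.mem_nhds ?_) ?_
      · show g₀ - g₀ ∈ S7.V R (N : ℤ)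
        rw [sub_self]
        exact fun i _ => HahnSeries.coeff_zero
      · intro g hg f hf
        have h0 : (f * (g - g₀)).coeff (-1) = 0 :=
          S7.mul_coeff_eq_zero (hN f hf) hg (by omega)
        have hfg : f * g = f * g₀ + f * (g - g₀) := by ring
        show (f * g).coeff (-1) ∈ U
        rw [hfg, HahnSeries.coeff_add, h0, add_zero]
        exact hg₀ hf
    exact Continuous.subtype_mk hcont _
  · -- openness
    intro Uo hUo
    rw [isOpen_iff_forall_mem_open]
    rintro l ⟨g₀, hg₀U, rfl⟩
    have hnb : (fun h : LaurentSeries R => g₀ + h) ⁻¹' Uo ∈ nhds (0 : LaurentSeries R) := by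
      refine ContinuousAt.preimage_mem_nhds
        (Continuous.continuousAt (continuous_const.add continuous_id)) ?_
      rw [add_zero]
      exact hUo.mem_nhds hg₀U
    obtain ⟨k, -, hk⟩ := hbasis.mem_iff.mp hnb
    have hkU : ∀ h ∈ S7.V R (k : ℤ), g₀ + h ∈ Uo := fun h hh => hk hh
    have hKc := S7.compact_singles hbasis (R := R) (k : ℤ)
    set K : Set (LaurentSeries R) := insert 0
      (Set.range fun m : ℕ => (HahnSeries.single (-(k : ℤ) + m) (1 : R) : LaurentSeries R))
      with hKdef
    set l₀ : C(LaurentSeries R, R) :=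
      ⟨fun f => (f * g₀).coeff (-1), S7.ell_continuous hbasis g₀⟩ with hl₀
    refine ⟨Subtype.val ⁻¹' {l' : C(LaurentSeries R, R) | ∀ f ∈ K, l' f = l₀ f}, ?_,
      (S7.open_agree hKc l₀).preimage continuous_subtype_val, fun f _ => rfl⟩
    rintro ⟨l', hl'⟩ hl'T
    obtain ⟨g, hg⟩ := S7.exists_rep hbasis l' hl'
    have hgg₀ : g - g₀ ∈ S7.V R (k : ℤ) := by
      intro j hj
      set a : ℤ := -(k : ℤ) + ((k - 1 - j).toNat : ℤ) with hadef
      have ha : (-1 : ℤ) - a = j := by omega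
      have hfK : (HahnSeries.single a (1 : R) : LaurentSeries R) ∈ K :=
        Set.mem_insert_of_mem _ ⟨(k - 1 - j).toNat, rfl⟩
      have h1 : l' (HahnSeries.single a (1 : R)) = l₀ (HahnSeries.single a (1 : R)) :=
        hl'T _ hfK
      have e1 : l' (HahnSeries.single a (1 : R)) = g.coeff j := by
        rw [hg, S7.res_single_mul, one_mul, ha]
      have e2 : l₀ (HahnSeries.single a (1 : R)) = g₀.coeff j := by
        show ((HahnSeries.single a (1 : R) : LaurentSeries R) * g₀).coeff (-1) = _
        rw [S7.res_single_mul, one_mul, ha]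
      rw [e1, e2] at h1
      rw [HahnSeries.coeff_sub, h1, sub_self]
    have hgU : g ∈ Uo := by
      have := hkU _ hgg₀
      rwa [add_sub_cancel] at this
    exact ⟨g, hgU, Subtype.ext (ContinuousMap.ext fun f => (hg f).symm)⟩
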